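/- Let G be an infinite group, A a group, and τ : A^G → A^G a G-equivariant continuous group homomorphism (group cellular automaton). If there exists a nonempty open G-invariant subset U ⊆ A^G such that τ restricted to U is injective, then τ is injective on all of A^G. -/

import Mathlib

theorem stmt_13 {G : Type*} [Group G] [Infinite G] {A : Type*} [Group A]
    [TopologicalSpace A] [DiscreteTopology A]
    (τ : (G → A) → G → A) (hcont : Continuous τ)
    (hequiv : ∀ (g : G) (x : G → A), τ (fun h => x (g⁻¹ * h)) = fun h => τ x (g⁻¹ * h))
    (hhom : ∀ x y : G → A, τ (x * y) = τ x * τ y)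
    (U : Set (G → A)) (hUopen : IsOpen U) (hUne : U.Nonempty)
    (hUinv : ∀ (g : G) (x : G → A), x ∈ U → (fun h => x (g⁻¹ * h)) ∈ U)
    (hinj : Set.InjOn τ U) :
    Function.Injective τ := by
  classical
  -- τ 1 = 1
  have hone : τ 1 = 1 := by
    have h := hhom 1 1
    rw [one_mul] at h
    exact left_eq_mul.mp h
  -- τ of inverse
  have hinv : ∀ x : G → A, τ x⁻¹ = (τ x)⁻¹ := by
    intro x
    have h : τ x⁻¹ * τ x = 1 := by
      rw [← hhom, inv_mul_cancel, hone]
    exact eq_inv_of_mul_eq_one_left h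
  -- density of U
  have key : ∀ W : Set (G → A), IsOpen W → W.Nonempty → (U ∩ W).Nonempty := by
    intro W hW hWne
    obtain ⟨w, hw⟩ := hWne
    obtain ⟨u, hu⟩ := hUne
    obtain ⟨F, s, hs, hFs⟩ := (isOpen_pi_iff.mp hUopen) u hu
    obtain ⟨E, t, ht, hEt⟩ := (isOpen_pi_iff.mp hW) w hw
    -- choose g with g • F disjoint from E
    set D : Finset G := E.biUnion (fun e => F.image (fun f => e * f⁻¹)) with hD
    obtain ⟨g, hg⟩ := Infinite.exists_notMem_finset D
    set x : G → A := fun h => if h ∈ E then w h else u (g⁻¹ * h) with hx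
    have hxW : x ∈ W := by
      apply hEt
      intro e he
      simp only [hx]
      rw [if_pos (Finset.mem_coe.mp he)]
      exact (ht e he).2
    have hgf : ∀ f ∈ F, g * f ∉ E := by
      intro f hf hcon
      apply hg
      rw [hD]
      refine Finset.mem_biUnion.mpr ⟨g * f, hcon, ?_⟩
      refine Finset.mem_image.mpr ⟨f, hf, ?_⟩
      group
    have hyU : (fun h => x (g * h)) ∈ U := by
      apply hFs
      intro f hf
      simp only [hx]
      rw [if_neg (hgf f (Finset.mem_coe.mp hf)), inv_mul_cancel_left]
      exact (hs f hf).2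
    have hxU : x ∈ U := by
      have := hUinv g _ hyU
      have heq : (fun h => x (g * (g⁻¹ * h))) = x := by
        funext h
        rw [mul_inv_cancel_left]
      rw [heq] at this
      exact this
    exact ⟨x, hxU, hxW⟩
  -- kernel is trivial
  have ker : ∀ k : G → A, τ k = 1 → k = 1 := by
    intro k hk
    by_contra hk1
    have hcontmul : Continuous (fun x : G → A => x * k) := by
      exact continuous_id.mul continuous_const
    have hVopen : IsOpen ((fun x : G → A => x * k) ⁻¹' U) := hUopen.preimage hcontmul
    obtain ⟨u, hu⟩ := hUne
    have hVne : ((fun x : G → A => x * k) ⁻¹' U).Nonempty := by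
      refine ⟨u * k⁻¹, ?_⟩
      simp only [Set.mem_preimage, inv_mul_cancel_right]
      exact hu
    obtain ⟨x0, hx0U, hx0V⟩ := key _ hVopen hVne
    have hx0kU : x0 * k ∈ U := hx0V
    have heq : τ (x0 * k) = τ x0 := by
      rw [hhom, hk, mul_one]
    have : x0 * k = x0 := hinj hx0kU hx0U heq
    exact hk1 (mul_eq_left.mp this)
  -- conclude
  intro x y hxy
  have hk : τ (x⁻¹ * y) = 1 := by
    rw [hhom, hinv, hxy, inv_mul_cancel]
  have := ker _ hk
  exact inv_mul_eq_one.mp this
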